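/- Fix m, l, g > 0, I₁, I₃ > 0, and ρ ∈ ℝ with ρ ≠ 0 and I₁ ρ ≠ m² l², and set 𝕀 = diag(I₁, I₁, I₃), χ = e₃ = (0,0,1). If Ω, v, Γ : ℝ → ℝ³ solve the closed-loop Euler–Poincaré system with these data, then the modified energy 𝓔(t) = ½(I₁(Ω₁(t)² + Ω₂(t)²) + I₃ Ω₃(t)²) + m (I₁ ρ/(I₁ ρ − m² l²)) g l Γ₃(t) is constant in t. -/

import Mathlib

open Matrix

/-- The closed-loop Euler–Poincaré system: with `μ = 𝕀Ω + m l (χ × v)` and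
`p = ρ v + m l (Ω × χ)`, the curves satisfy
`μ' = μ × Ω + p × v − m g l (χ × Γ)`, `p' = p × Ω`, `Γ' = Γ × Ω`. -/
def ClosedLoopEP (m l g ρ : ℝ) (χ : Fin 3 → ℝ) (I : Matrix (Fin 3) (Fin 3) ℝ)
    (Ω v Γ : ℝ → Fin 3 → ℝ) : Prop :=
  Differentiable ℝ Ω ∧ Differentiable ℝ v ∧ Differentiable ℝ Γ ∧
  (∀ t, deriv (fun s => I *ᵥ Ω s + (m * l) • (χ ⨯₃ v s)) t
      = (I *ᵥ Ω t + (m * l) • (χ ⨯₃ v t)) ⨯₃ Ω t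
        + (ρ • v t + (m * l) • (Ω t ⨯₃ χ)) ⨯₃ v t - (m * g * l) • (χ ⨯₃ Γ t)) ∧
  (∀ t, deriv (fun s => ρ • v s + (m * l) • (Ω s ⨯₃ χ)) t
      = (ρ • v t + (m * l) • (Ω t ⨯₃ χ)) ⨯₃ Ω t) ∧
  (∀ t, deriv Γ t = Γ t ⨯₃ Ω t)

/-- For the Lagrange top (`𝕀 = diag(I₁, I₁, I₃)`, `χ = e₃`), along solutions of the
closed-loop system the modified energy
`𝓔 = ½(I₁(Ω₁² + Ω₂²) + I₃Ω₃²) + m (I₁ρ/(I₁ρ − m²l²)) g l Γ₃` (the heavy-top energy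
with modified gravitational constant `(I₁ρ/(I₁ρ − m²l²)) g`) is constant in time. -/
theorem heavyTop_modified_energy_constant (m l g ρ I₁ I₃ : ℝ)
    (hm : 0 < m) (hl : 0 < l) (hg : 0 < g) (hI₁ : 0 < I₁) (hI₃ : 0 < I₃)
    (hρ : ρ ≠ 0) (hρm : I₁ * ρ ≠ m ^ 2 * l ^ 2)
    (Ω v Γ : ℝ → Fin 3 → ℝ)
    (hsol : ClosedLoopEP m l g ρ ![(0 : ℝ), 0, 1] (Matrix.diagonal ![I₁, I₁, I₃]) Ω v Γ)
    (𝓔 : ℝ → ℝ)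
    (h𝓔 : ∀ t, 𝓔 t = (1 / 2) * (I₁ * ((Ω t 0) ^ 2 + (Ω t 1) ^ 2) + I₃ * (Ω t 2) ^ 2)
        + m * (I₁ * ρ / (I₁ * ρ - m ^ 2 * l ^ 2)) * g * l * Γ t 2) :
    ∀ t, 𝓔 t = 𝓔 0 := by
  obtain ⟨hΩ, hv, hΓ, hμ, hp, hΓd⟩ := hsol
  have hk0 : I₁ * ρ - m ^ 2 * l ^ 2 ≠ 0 := sub_ne_zero.mpr hρm
  have hI₃0 : I₃ ≠ 0 := ne_of_gt hI₃
  have hΩ0 : Differentiable ℝ fun s => Ω s 0 := differentiable_pi.mp hΩ 0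
  have hΩ1 : Differentiable ℝ fun s => Ω s 1 := differentiable_pi.mp hΩ 1
  have hΩ2 : Differentiable ℝ fun s => Ω s 2 := differentiable_pi.mp hΩ 2
  have hv0 : Differentiable ℝ fun s => v s 0 := differentiable_pi.mp hv 0
  have hv1 : Differentiable ℝ fun s => v s 1 := differentiable_pi.mp hv 1
  have hv2 : Differentiable ℝ fun s => v s 2 := differentiable_pi.mp hv 2
  have hFd : Differentiable ℝ
      (fun s => Matrix.diagonal ![I₁, I₁, I₃] *ᵥ Ω s + (m * l) • ((![(0:ℝ),0,1]) ⨯₃ v s)) := by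
    apply differentiable_pi.mpr
    intro i
    fin_cases i <;> simp [Matrix.mulVec_diagonal, cross_apply] <;> fun_prop
  have hGd : Differentiable ℝ
      (fun s => ρ • v s + (m * l) • (Ω s ⨯₃ (![(0:ℝ),0,1]))) := by
    apply differentiable_pi.mpr
    intro i
    fin_cases i <;> simp [cross_apply] <;> fun_prop
  have key : ∀ t, HasDerivAt 𝓔 0 t := by
    intro t
    have hFd' := (hμ t) ▸ (hFd t).hasDerivAt
    have hA0 := hasDerivAt_pi.mp hFd' 0
    have hA1 := hasDerivAt_pi.mp hFd' 1
    have hA2 := hasDerivAt_pi.mp hFd' 2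
    have hGd' := (hp t) ▸ (hGd t).hasDerivAt
    have hB0 := hasDerivAt_pi.mp hGd' 0
    have hB1 := hasDerivAt_pi.mp hGd' 1
    simp only [cross_apply, Matrix.mulVec_diagonal, Matrix.vecHead, Matrix.vecTail,
      Pi.add_apply, Pi.smul_apply, Pi.sub_apply, smul_eq_mul, Function.comp_apply,
      Matrix.cons_val_zero, Matrix.cons_val_one, Matrix.head_cons, Matrix.head_fin_const,
      Matrix.cons_val_two, Matrix.tail_cons, Matrix.cons_val_succ, zero_mul, one_mul, mul_zero, mul_one,
      zero_sub, sub_zero, zero_add, add_zero, neg_mul, mul_neg, neg_neg, neg_zero]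
      at hA0 hA1 hA2 hB0 hB1
    have hΓ' := (hΓd t) ▸ (hΓ t).hasDerivAt
    have hC2 := hasDerivAt_pi.mp hΓ' 2
    simp only [cross_apply, Matrix.cons_val_two, Matrix.tail_cons, Matrix.head_cons,
      Matrix.cons_val_zero, Matrix.cons_val_one] at hC2
    -- recover derivatives of Ω components
    have hw0 := (((hA0.const_mul ρ).add (hB1.const_mul (m * l))).div_const
        (I₁ * ρ - m ^ 2 * l ^ 2)).congr_of_eventuallyEq
      (Filter.Eventually.of_forall (fun s : ℝ => by
        show Ω s 0 = _
        simp only [Pi.add_apply]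
        field_simp [(by rw [mul_comm ρ I₁]; exact hk0 : ρ * I₁ - m ^ 2 * l ^ 2 ≠ 0)]
        ring))
    have hw1 := (((hA1.const_mul ρ).sub (hB0.const_mul (m * l))).div_const
        (I₁ * ρ - m ^ 2 * l ^ 2)).congr_of_eventuallyEq
      (Filter.Eventually.of_forall (fun s : ℝ => by
        show Ω s 1 = _
        simp only [Pi.sub_apply]
        field_simp [(by rw [mul_comm ρ I₁]; exact hk0 : ρ * I₁ - m ^ 2 * l ^ 2 ≠ 0)]
        ring))
    have hw2 := (hA2.div_const I₃).congr_of_eventuallyEq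
      (Filter.Eventually.of_forall (fun s : ℝ => by
        show Ω s 2 = _
        field_simp))
    have hbig := (((((hw0.pow 2).add (hw1.pow 2)).const_mul I₁).add
        ((hw2.pow 2).const_mul I₃)).const_mul (1 / 2)).add
        (hC2.const_mul (m * (I₁ * ρ / (I₁ * ρ - m ^ 2 * l ^ 2)) * g * l))
    have hEfun : 𝓔 = fun t => (1 / 2) * (I₁ * ((Ω t 0) ^ 2 + (Ω t 1) ^ 2) + I₃ * (Ω t 2) ^ 2)
        + m * (I₁ * ρ / (I₁ * ρ - m ^ 2 * l ^ 2)) * g * l * Γ t 2 := funext h𝓔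
    rw [hEfun]
    refine hbig.congr_deriv ?_
    field_simp
    ring
  exact fun t => is_const_of_deriv_eq_zero (fun x => (key x).differentiableAt)
    (fun x => (key x).deriv) t 0
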